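/- For every real w > 0, √(2π) · w · e^{w²/2} · (1 − Φ(w)) ≤ (w² + 2)/(w² + 3), where Φ is the standard normal cumulative distribution function. -/

import Mathlib

noncomputable section

/-- The standard normal cumulative distribution function
`Φ(w) = ∫_{-∞}^w (1/√(2π)) e^{-t²/2} dt`. -/
def Phi (w : ℝ) : ℝ :=
  ∫ t in Set.Iic w, (1 / Real.sqrt (2 * Real.pi)) * Real.exp (-t ^ 2 / 2)

open Real MeasureTheory Set Filter Topology

def Gfun (x : ℝ) : ℝ := Real.exp (-x ^ 2 / 2) * (1 + 6 / (x ^ 2 * (x ^ 2 + 3) ^ 2))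

lemma gauss_hasDerivAt (x : ℝ) :
    HasDerivAt (fun t : ℝ => Real.exp (-t ^ 2 / 2)) (Real.exp (-x ^ 2 / 2) * (-x)) x := by
  have h1 : HasDerivAt (fun t : ℝ => -t ^ 2 / 2) (-x) x := by
    have := ((hasDerivAt_pow 2 x).neg.div_const 2)
    refine this.congr_deriv ?_
    ring
  exact h1.exp

lemma gauss_integrable : Integrable (fun t : ℝ => Real.exp (-t ^ 2 / 2)) := by
  have h := integrable_exp_neg_mul_sq (by norm_num : (0:ℝ) < 1/2)
  convert h using 2 with t
  ring_nf

lemma F_hasDerivAt (x : ℝ) (hx : 0 < x) :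
    HasDerivAt (fun t : ℝ => -(Real.exp (-t ^ 2 / 2) * ((t ^ 2 + 2) / (t ^ 3 + 3 * t))))
      (Gfun x) x := by
  have hden : x ^ 3 + 3 * x ≠ 0 := by positivity
  have hnum : HasDerivAt (fun t : ℝ => t ^ 2 + 2) (2 * x) x := by
    have := (hasDerivAt_pow 2 x).add_const (2:ℝ)
    refine this.congr_deriv ?_
    ring
  have hden' : HasDerivAt (fun t : ℝ => t ^ 3 + 3 * t) (3 * x ^ 2 + 3) x := by
    have := (hasDerivAt_pow 3 x).add ((hasDerivAt_id x).const_mul 3)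
    refine this.congr_deriv ?_
    ring
  have hq : HasDerivAt (fun t : ℝ => (t ^ 2 + 2) / (t ^ 3 + 3 * t))
      ((2 * x * (x ^ 3 + 3 * x) - (x ^ 2 + 2) * (3 * x ^ 2 + 3)) / (x ^ 3 + 3 * x) ^ 2) x :=
    hnum.div hden' hden
  have h := ((gauss_hasDerivAt x).mul hq).neg
  refine h.congr_deriv ?_
  have hx0 : x ≠ 0 := ne_of_gt hx
  have hx3 : x ^ 2 + 3 ≠ 0 := by positivity
  rw [Gfun]
  field_simp
  ring

lemma F_tendsto :
    Tendsto (fun t : ℝ => -(Real.exp (-t ^ 2 / 2) * ((t ^ 2 + 2) / (t ^ 3 + 3 * t))))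
      atTop (𝓝 0) := by
  rw [show (0:ℝ) = -0 by ring]
  apply Tendsto.neg
  have hexp : Tendsto (fun t : ℝ => Real.exp (-t ^ 2 / 2)) atTop (𝓝 0) := by
    have h1 : Tendsto (fun t : ℝ => t ^ 2 / 2) atTop atTop :=
      (tendsto_pow_atTop (by norm_num)).atTop_div_const (by norm_num)
    have := Real.tendsto_exp_neg_atTop_nhds_zero.comp h1
    convert this using 2 with t
    simp [Function.comp]
    ring_nf
  apply squeeze_zero' (g := fun t : ℝ => Real.exp (-t ^ 2 / 2)) ?_ ?_ hexp
  · filter_upwards [eventually_ge_atTop (1:ℝ)] with t ht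
    have ht0 : (0:ℝ) < t := lt_of_lt_of_le one_pos ht
    have h1 : (0:ℝ) < t ^ 3 + 3 * t := by positivity
    positivity
  · filter_upwards [eventually_ge_atTop (1:ℝ)] with t ht
    have ht0 : (0:ℝ) < t := lt_of_lt_of_le one_pos ht
    have h1 : (0:ℝ) < t ^ 3 + 3 * t := by positivity
    have h2 : (t ^ 2 + 2) / (t ^ 3 + 3 * t) ≤ 1 := by
      rw [div_le_one h1]; nlinarith
    have h3 := Real.exp_pos (-t ^ 2 / 2)
    nlinarith [mul_le_of_le_one_right h3.le h2]

lemma Gfun_measurable : Measurable Gfun := by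
  apply Measurable.mul
  · exact (((measurable_id.pow_const 2).neg).div_const 2).exp
  · apply Measurable.add measurable_const
    exact measurable_const.div
      ((measurable_id.pow_const 2).mul (((measurable_id.pow_const 2).add_const 3).pow_const 2))

lemma Gfun_integrableOn (w : ℝ) (hw : 0 < w) : IntegrableOn Gfun (Ioi w) := by
  have hbig : Integrable (fun x : ℝ =>
      Real.exp (-x ^ 2 / 2) * (1 + 6 / (w ^ 2 * (w ^ 2 + 3) ^ 2))) :=
    gauss_integrable.mul_const _
  apply Integrable.mono' (hbig.restrict (s := Ioi w))
  · exact Gfun_measurable.aestronglyMeasurable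
  · filter_upwards [ae_restrict_mem measurableSet_Ioi] with x hx
    have hxw : w ≤ x := le_of_lt hx
    have hx0 : 0 < x := lt_of_lt_of_le hw hxw
    have h1 : 0 < w ^ 2 * (w ^ 2 + 3) ^ 2 := by positivity
    have hw2 : w ^ 2 ≤ x ^ 2 := by nlinarith
    have hw4 : w ^ 2 * w ^ 2 ≤ x ^ 2 * x ^ 2 := by nlinarith
    have hw6 : w ^ 2 * w ^ 2 * w ^ 2 ≤ x ^ 2 * x ^ 2 * x ^ 2 := by nlinarith
    have h2 : w ^ 2 * (w ^ 2 + 3) ^ 2 ≤ x ^ 2 * (x ^ 2 + 3) ^ 2 := by nlinarith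
    have h3 : 6 / (x ^ 2 * (x ^ 2 + 3) ^ 2) ≤ 6 / (w ^ 2 * (w ^ 2 + 3) ^ 2) :=
      div_le_div_of_nonneg_left (by norm_num) h1 h2
    have h4 : (1:ℝ) + 6 / (x ^ 2 * (x ^ 2 + 3) ^ 2) ≤ 1 + 6 / (w ^ 2 * (w ^ 2 + 3) ^ 2) := by
      linarith
    rw [Gfun, Real.norm_eq_abs, abs_of_nonneg (by positivity)]
    exact mul_le_mul_of_nonneg_left h4 (Real.exp_pos _).le

lemma gauss_integral_Ioi_le (w : ℝ) (hw : 0 < w) :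
    ∫ t in Ioi w, Real.exp (-t ^ 2 / 2)
      ≤ Real.exp (-w ^ 2 / 2) * ((w ^ 2 + 2) / (w ^ 3 + 3 * w)) := by
  have hFTC : ∫ x in Ioi w, Gfun x
      = Real.exp (-w ^ 2 / 2) * ((w ^ 2 + 2) / (w ^ 3 + 3 * w)) := by
    have := integral_Ioi_of_hasDerivAt_of_tendsto'
      (f := fun t : ℝ => -(Real.exp (-t ^ 2 / 2) * ((t ^ 2 + 2) / (t ^ 3 + 3 * t))))
      (f' := Gfun) (a := w) (m := 0)
      (fun x hx => F_hasDerivAt x (lt_of_lt_of_le hw hx)) (Gfun_integrableOn w hw) F_tendsto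
    rw [this]
    ring
  rw [← hFTC]
  apply setIntegral_mono_on (gauss_integrable.integrableOn) (Gfun_integrableOn w hw)
    measurableSet_Ioi
  intro x hx
  have hx0 : 0 < x := lt_of_lt_of_le hw (le_of_lt hx)
  rw [Gfun]
  have h1 : (0:ℝ) < 6 / (x ^ 2 * (x ^ 2 + 3) ^ 2) := by positivity
  nlinarith [Real.exp_pos (-x ^ 2 / 2)]

/-- For every `w > 0`, `√(2π) w e^{w²/2} (1 - Φ(w)) ≤ (w² + 2)/(w² + 3)`. -/
theorem mills_type_bound (w : ℝ) (hw : 0 < w) :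
    Real.sqrt (2 * Real.pi) * w * Real.exp (w ^ 2 / 2) * (1 - Phi w) ≤
      (w ^ 2 + 2) / (w ^ 2 + 3) := by
  have hsqrt : 0 < Real.sqrt (2 * Real.pi) := Real.sqrt_pos.mpr (by positivity)
  have htot : ∫ t : ℝ, Real.exp (-t ^ 2 / 2) = Real.sqrt (2 * Real.pi) := by
    have h := integral_gaussian (1/2 : ℝ)
    rw [show Real.pi / (1/2) = 2 * Real.pi by ring] at h
    rw [← h]
    congr 1 with t
    ring_nf
  have hsplit : Phi w + (1 / Real.sqrt (2 * Real.pi)) * ∫ t in Ioi w, Real.exp (-t ^ 2 / 2)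
      = 1 := by
    have h1 : Phi w = (1 / Real.sqrt (2 * Real.pi)) * ∫ t in Iic w, Real.exp (-t ^ 2 / 2) := by
      rw [Phi]; exact MeasureTheory.integral_const_mul _ _
    rw [h1, ← mul_add, intervalIntegral.integral_Iic_add_Ioi gauss_integrable.integrableOn
      gauss_integrable.integrableOn, htot]
    field_simp
  have h1Phi : 1 - Phi w
      = (1 / Real.sqrt (2 * Real.pi)) * ∫ t in Ioi w, Real.exp (-t ^ 2 / 2) := by
    linarith
  rw [h1Phi]
  have hkey : Real.sqrt (2 * Real.pi) * w * Real.exp (w ^ 2 / 2) *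
      ((1 / Real.sqrt (2 * Real.pi)) * ∫ t in Ioi w, Real.exp (-t ^ 2 / 2))
      = w * Real.exp (w ^ 2 / 2) * ∫ t in Ioi w, Real.exp (-t ^ 2 / 2) := by
    field_simp
  rw [hkey]
  have hpos : 0 < w * Real.exp (w ^ 2 / 2) := by positivity
  calc w * Real.exp (w ^ 2 / 2) * ∫ t in Ioi w, Real.exp (-t ^ 2 / 2)
      ≤ w * Real.exp (w ^ 2 / 2) * (Real.exp (-w ^ 2 / 2) * ((w ^ 2 + 2) / (w ^ 3 + 3 * w))) :=
        mul_le_mul_of_nonneg_left (gauss_integral_Ioi_le w hw) hpos.le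
    _ = (Real.exp (w ^ 2 / 2) * Real.exp (-w ^ 2 / 2)) *
          (w * ((w ^ 2 + 2) / (w ^ 3 + 3 * w))) := by ring
    _ = (w ^ 2 + 2) / (w ^ 2 + 3) := by
        rw [← Real.exp_add]
        have he : w ^ 2 / 2 + -w ^ 2 / 2 = 0 := by ring
        rw [he, Real.exp_zero, one_mul,
          show w ^ 3 + 3 * w = w * (w ^ 2 + 3) by ring]
        have h1 : w ≠ 0 := ne_of_gt hw
        have h2 : w ^ 2 + 3 ≠ 0 := by positivity
        field_simp
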